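/- Two σ-finite measures P and Q on (Ω, ℰ) with 0 < P(Ω), Q(Ω) determine the same family of conditional probabilities—i.e., {B : 0 < P(B) < ∞} = {B : 0 < Q(B) < ∞} and P(A∩B)/P(B) = Q(A∩B)/Q(B) for all such B and all A ∈ ℰ—if and only if Q = cP for some constant c > 0. -/

import Mathlib

open MeasureTheory Set NNReal ENNReal

theorem same_conditionals_iff_proportional {Ω : Type*} [MeasurableSpace Ω]
    (P Q : Measure Ω) [SigmaFinite P] [SigmaFinite Q]
    (hP : 0 < P Set.univ) (hQ : 0 < Q Set.univ) :
    (({B : Set Ω | MeasurableSet B ∧ 0 < P B ∧ P B < ⊤} =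
        {B : Set Ω | MeasurableSet B ∧ 0 < Q B ∧ Q B < ⊤}) ∧
      ∀ B ∈ {B : Set Ω | MeasurableSet B ∧ 0 < P B ∧ P B < ⊤},
        ∀ A : Set Ω, MeasurableSet A → P (A ∩ B) / P B = Q (A ∩ B) / Q B) ↔
    ∃ c : ℝ≥0, 0 < c ∧ Q = c • P := by
  constructor
  · rintro ⟨hsets, hcond⟩
    -- find B₀ with 0 < P B₀ < ∞
    obtain ⟨n, hn⟩ : ∃ n, P (spanningSets P n) ≠ 0 := by
      by_contra h
      push_neg at h
      have : P Set.univ = 0 := by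
        rw [← iUnion_spanningSets P]
        refine le_antisymm (le_trans (measure_iUnion_le _) ?_) zero_le
        simp [h]
      exact absurd this (by simpa [pos_iff_ne_zero] using hP)
    set B₀ := spanningSets P n with hB₀def
    have hB₀m : MeasurableSet B₀ := measurableSet_spanningSets P n
    have hPB₀ : 0 < P B₀ := pos_iff_ne_zero.mpr hn
    have hPB₀' : P B₀ < ⊤ := measure_spanningSets_lt_top P n
    have hB₀mem : B₀ ∈ {B : Set Ω | MeasurableSet B ∧ 0 < P B ∧ P B < ⊤} :=
      ⟨hB₀m, hPB₀, hPB₀'⟩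
    have hB₀Q : 0 < Q B₀ ∧ Q B₀ < ⊤ := by
      have := hsets ▸ hB₀mem
      exact ⟨this.2.1, this.2.2⟩
    -- key lemma
    have key : ∀ A : Set Ω, MeasurableSet A → P A < ⊤ → Q A = (Q B₀ / P B₀) * P A := by
      intro A hA hPA
      set B := A ∪ B₀ with hBdef
      have hBm : MeasurableSet B := hA.union hB₀m
      have hPB : 0 < P B := lt_of_lt_of_le hPB₀ (measure_mono subset_union_right)
      have hPB' : P B < ⊤ :=
        lt_of_le_of_lt (measure_union_le _ _) (ENNReal.add_lt_top.mpr ⟨hPA, hPB₀'⟩)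
      have hBmem : B ∈ {B : Set Ω | MeasurableSet B ∧ 0 < P B ∧ P B < ⊤} :=
        ⟨hBm, hPB, hPB'⟩
      have hBQ : 0 < Q B ∧ Q B < ⊤ := by
        have := hsets ▸ hBmem
        exact ⟨this.2.1, this.2.2⟩
      have eq1 : P A / P B = Q A / Q B := by
        have := hcond B hBmem A hA
        rwa [Set.inter_eq_self_of_subset_left subset_union_left] at this
      have eq2 : P B₀ / P B = Q B₀ / Q B := by
        have := hcond B hBmem B₀ hB₀m
        rwa [Set.inter_eq_self_of_subset_left subset_union_right] at this
      have hQA : Q A = (P A / P B) * Q B := by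
        rw [eq1, ENNReal.div_mul_cancel hBQ.1.ne' hBQ.2.ne]
      have hQB₀ : Q B₀ = (P B₀ / P B) * Q B := by
        rw [eq2, ENNReal.div_mul_cancel hBQ.1.ne' hBQ.2.ne]
      rw [hQA, hQB₀]
      rw [div_eq_mul_inv, div_eq_mul_inv, div_eq_mul_inv]
      ring_nf
      rw [mul_assoc _ (P B₀) (P B₀)⁻¹, ENNReal.mul_inv_cancel hPB₀.ne' hPB₀'.ne, mul_one]
    set c : ℝ≥0 := (Q B₀ / P B₀).toNNReal with hcdef
    have hcne : Q B₀ / P B₀ ≠ ⊤ := by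
      exact (ENNReal.div_lt_top hB₀Q.2.ne hPB₀.ne').ne
    have hccoe : (c : ℝ≥0∞) = Q B₀ / P B₀ := ENNReal.coe_toNNReal hcne
    have hcpos : 0 < c := by
      rw [← ENNReal.coe_pos, hccoe]
      exact ENNReal.div_pos hB₀Q.1.ne' hPB₀'.ne
    refine ⟨c, hcpos, ?_⟩
    ext A hA
    rw [Measure.smul_apply, ENNReal.smul_def, smul_eq_mul, hccoe]
    rcases lt_or_eq_of_le (le_top : P A ≤ ⊤) with hPA | hPA
    · exact key A hA hPA
    · -- P A = ∞, show Q A = ∞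
      have hdiv0 : Q B₀ / P B₀ ≠ 0 := (ENNReal.div_pos hB₀Q.1.ne' hPB₀'.ne).ne'
      rw [hPA, ENNReal.mul_top hdiv0]
      have hmono : Monotone fun m => A ∩ spanningSets P m :=
        fun i j h => inter_subset_inter_right A (monotone_spanningSets P h)
      have hUnion : ⋃ m, A ∩ spanningSets P m = A := by
        rw [← inter_iUnion, iUnion_spanningSets, inter_univ]
      have hsup : (⨆ m, P (A ∩ spanningSets P m)) = ⊤ := by
        rw [← hmono.directed_le.measure_iUnion, hUnion, ← hPA]
      refine top_le_iff.mp ?_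
      calc (⊤ : ℝ≥0∞) = (Q B₀ / P B₀) * ⨆ m, P (A ∩ spanningSets P m) := by
              rw [hsup, ENNReal.mul_top hdiv0]
        _ = ⨆ m, (Q B₀ / P B₀) * P (A ∩ spanningSets P m) := by rw [ENNReal.mul_iSup]
        _ = ⨆ m, Q (A ∩ spanningSets P m) := by
              refine iSup_congr fun m => ?_
              exact (key _ (hA.inter (measurableSet_spanningSets P m))
                (lt_of_le_of_lt (measure_mono inter_subset_right)
                  (measure_spanningSets_lt_top P m))).symm
        _ ≤ Q A := iSup_le fun m => measure_mono inter_subset_left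
  · rintro ⟨c, hc, rfl⟩
    have hc0 : (c : ℝ≥0∞) ≠ 0 := by exact_mod_cast hc.ne'
    have hct : (c : ℝ≥0∞) ≠ ⊤ := ENNReal.coe_ne_top
    constructor
    · ext B
      simp only [Set.mem_setOf_eq, Measure.smul_apply, ENNReal.smul_def, smul_eq_mul]
      refine and_congr_right fun _ => ?_
      rw [pos_iff_ne_zero, pos_iff_ne_zero]
      have hinv : P B = (c : ℝ≥0∞)⁻¹ * (↑c * P B) := by
        rw [← mul_assoc, ENNReal.inv_mul_cancel hc0 hct, one_mul]
      constructor
      · rintro ⟨h0, h1⟩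
        exact ⟨mul_ne_zero hc0 h0, ENNReal.mul_lt_top hct.lt_top h1⟩
      · rintro ⟨h0, h1⟩
        refine ⟨fun h => h0 (by rw [h, mul_zero]), ?_⟩
        rw [hinv]
        exact ENNReal.mul_lt_top (ENNReal.inv_lt_top.mpr (pos_iff_ne_zero.mpr hc0)) h1
    · intro B hB A hA
      simp only [Measure.smul_apply, ENNReal.smul_def, smul_eq_mul]
      rw [ENNReal.mul_div_mul_left _ _ hc0 hct]
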